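/- Assume conditions (A2) and (A3), and let Z be a nonnegative random variable on a probability space whose Laplace transform satisfies E[e^{−λ Z}] = exp(−∫₀^∞ F(v_s(λ)) ds) for all λ ≥ 0. Then for every λ > 0, E[Z e^{−λ Z}] = (F(λ)/ψ(λ)) · E[e^{−λ Z}]. Moreover, if b > 0 and β + ∫₀^∞ u n(du) < ∞, then E[Z] = (β + ∫₀^∞ u n(du))/b. -/

import Mathlib

open MeasureTheory Real Set Filter

/-- The (sub)-critical branching mechanism
`ψ(z) = b z + σ z² + ∫₀^∞ (e^{−z u} − 1 + z u) m(du)`. -/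
noncomputable def psi (b σ : ℝ) (m : Measure ℝ) (z : ℝ) : ℝ :=
  b * z + σ * z ^ 2 + ∫ u in Ioi (0 : ℝ), (Real.exp (-(z * u)) - 1 + z * u) ∂m

/-- Condition (A3): either `σ > 0` or `∫₀^1 u m(du) = ∞`. -/
def condA3 (σ : ℝ) (m : Measure ℝ) : Prop :=
  0 < σ ∨ ∫⁻ u in Ioc (0 : ℝ) 1, ENNReal.ofReal u ∂m = ⊤

/-- `v t λ ∈ (0, λ]` is the unique solution of `∫_{v_t(λ)}^{λ} dz/ψ(z) = t`
(the cumulant semigroup). -/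
def IsCumulant (b σ : ℝ) (m : Measure ℝ) (v : ℝ → ℝ → ℝ) : Prop :=
  ∀ lam > (0 : ℝ), ∀ t ≥ (0 : ℝ),
    v t lam ∈ Ioc 0 lam ∧ ∫ z in (v t lam)..lam, (psi b σ m z)⁻¹ = t

/-- The immigration mechanism `F(z) = β z + ∫₀^∞ (1 − e^{−z u}) n(du)`. -/
noncomputable def Fim (β : ℝ) (n : Measure ℝ) (z : ℝ) : ℝ :=
  β * z + ∫ u in Ioi (0 : ℝ), (1 - Real.exp (-(z * u))) ∂n

/-- Condition (A2): `∫₀^λ F(z)/ψ(z) dz < ∞` for some `λ > 0`. -/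
def condA2 (b σ β : ℝ) (m n : Measure ℝ) : Prop :=
  ∃ lam > (0 : ℝ), IntegrableOn (fun z => Fim β n z / psi b σ m z) (Ioo 0 lam)

open scoped Topology ENNReal NNReal


lemma aux_nonneg (x : ℝ) : 0 ≤ Real.exp (-x) - 1 + x := by
  nlinarith [Real.add_one_le_exp (-x)]

lemma aux_pos {x : ℝ} (hx : 0 < x) : 0 < Real.exp (-x) - 1 + x := by
  nlinarith [Real.add_one_lt_exp (show (-x) ≠ 0 by linarith)]

lemma aux_le_lin {x : ℝ} (hx : 0 ≤ x) : Real.exp (-x) - 1 + x ≤ x := by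
  nlinarith [Real.exp_le_one_iff.2 (show -x ≤ 0 by linarith)]

lemma aux_le_quad_mono : Monotone (fun x : ℝ => (1 - x + x^2/2) * Real.exp x) := by
  have h : ∀ x : ℝ, HasDerivAt (fun x : ℝ => (1 - x + x^2/2) * Real.exp x)
      ((x^2/2) * Real.exp x) x := by
    intro x
    have h1 : HasDerivAt (fun x : ℝ => 1 - x + x^2/2) (-1 + x) x := by
      have := ((hasDerivAt_id x).const_sub 1).add (((hasDerivAt_id x).pow 2).div_const 2)
      exact this.congr_deriv (by simp)
    have := h1.mul (Real.hasDerivAt_exp x)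
    exact this.congr_deriv (by ring)
  exact monotone_of_deriv_nonneg (fun x => (h x).differentiableAt)
    (by intro x; rw [(h x).deriv]; positivity)

lemma aux_le_quad {x : ℝ} (hx : 0 ≤ x) : Real.exp (-x) - 1 + x ≤ x^2/2 := by
  have := aux_le_quad_mono (show (0:ℝ) ≤ x from hx)
  simp only [Real.exp_zero] at this
  have hex := Real.exp_pos x
  have hkey : 1 ≤ (1 - x + x^2/2) * Real.exp x := by simpa using this
  have : Real.exp (-x) ≤ 1 - x + x^2/2 := by
    rw [Real.exp_neg]
    rw [inv_le_iff_one_le_mul₀ hex]  -- guess name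
    linarith [hkey]
  linarith

lemma aux_one_sub_nonneg {x : ℝ} (hx : 0 ≤ x) : 0 ≤ 1 - Real.exp (-x) := by
  have := Real.exp_le_one_iff.2 (show -x ≤ 0 by linarith); linarith

lemma aux_one_sub_le_one {x : ℝ} (hx : 0 ≤ x) : 1 - Real.exp (-x) ≤ 1 := by
  have := Real.exp_nonneg (-x); linarith

lemma aux_one_sub_le_lin {x : ℝ} (hx : 0 ≤ x) : 1 - Real.exp (-x) ≤ x := by
  nlinarith [Real.add_one_le_exp (-x)]

lemma aux_mul_exp_le {c x : ℝ} (hc : 0 < c) (hx : 0 ≤ x) :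
    x * Real.exp (-(c*x)) ≤ (c * Real.exp 1)⁻¹ := by
  have h1 : c*x * Real.exp (-(c*x)) ≤ (Real.exp 1)⁻¹ := by
    have hy : c*x ≤ Real.exp (c*x - 1) := by linarith [Real.add_one_le_exp (c*x-1)]
    calc c*x * Real.exp (-(c*x)) ≤ Real.exp (c*x-1) * Real.exp (-(c*x)) :=
          mul_le_mul_of_nonneg_right hy (Real.exp_nonneg _)
      _ = Real.exp (-1) := by rw [← Real.exp_add]; ring_nf
      _ = (Real.exp 1)⁻¹ := by rw [Real.exp_neg]
  rw [mul_inv]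
  have e1 := (Real.exp_pos 1).le
  calc x * Real.exp (-(c*x)) = c⁻¹ * (c*x*Real.exp (-(c*x))) := by field_simp
    _ ≤ c⁻¹ * (Real.exp 1)⁻¹ := by
        exact mul_le_mul_of_nonneg_left h1 (by positivity)

section mech
variable {b σ β : ℝ} {m n : Measure ℝ}

lemma psi_int_bound {z u : ℝ} (hz : 0 < z) (hu : 0 < u) :
    ‖Real.exp (-(z*u)) - 1 + z*u‖ ≤ max z (z^2/2) * min u (u^2) := by
  have h0 : 0 ≤ Real.exp (-(z*u)) - 1 + z*u := aux_nonneg _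
  rw [Real.norm_eq_abs, abs_of_nonneg h0]
  rcases le_or_gt u 1 with h|h
  · have : Real.exp (-(z*u)) - 1 + z*u ≤ (z*u)^2/2 := aux_le_quad (by positivity)
    have hmin : min u (u^2) = u^2 := min_eq_right (by nlinarith)
    rw [hmin]
    calc Real.exp (-(z*u)) - 1 + z*u ≤ (z*u)^2/2 := this
      _ = z^2/2 * u^2 := by ring
      _ ≤ max z (z^2/2) * u^2 := by nlinarith [le_max_right z (z^2/2)]
  · have : Real.exp (-(z*u)) - 1 + z*u ≤ z*u := aux_le_lin (by positivity)
    have hmin : min u (u^2) = u := min_eq_left (by nlinarith)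
    rw [hmin]
    calc Real.exp (-(z*u)) - 1 + z*u ≤ z*u := this
      _ ≤ max z (z^2/2) * u := by nlinarith [le_max_left z (z^2/2)]

lemma fim_int_bound {z u : ℝ} (hz : 0 < z) (hu : 0 < u) :
    ‖1 - Real.exp (-(z*u))‖ ≤ max 1 z * min 1 u := by
  have h0 : 0 ≤ 1 - Real.exp (-(z*u)) := aux_one_sub_nonneg (mul_nonneg hz.le hu.le)
  rw [Real.norm_eq_abs, abs_of_nonneg h0]
  rcases le_or_gt u 1 with h|h
  · have := aux_one_sub_le_lin (show (0:ℝ) ≤ z*u by positivity)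
    have hmin : min 1 u = u := min_eq_right h
    rw [hmin]
    nlinarith [le_max_right 1 z]
  · have := aux_one_sub_le_one (show (0:ℝ) ≤ z*u by positivity)
    have hmin : min 1 u = (1:ℝ) := min_eq_left h.le
    rw [hmin]
    nlinarith [le_max_left 1 z]

lemma psi_integrand_integrable (hm : IntegrableOn (fun u => min u (u ^ 2)) (Ioi 0) m)
    {z : ℝ} (hz : 0 < z) :
    IntegrableOn (fun u => Real.exp (-(z*u)) - 1 + z*u) (Ioi 0) m := by
  refine Integrable.mono' (hm.const_mul (max z (z^2/2))) ?_ ?_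
  · exact (Continuous.aestronglyMeasurable (by continuity))
  · filter_upwards [ae_restrict_mem measurableSet_Ioi] with u hu
    exact psi_int_bound hz hu

lemma fim_integrand_integrable (hn : IntegrableOn (fun u => min 1 u) (Ioi 0) n)
    {z : ℝ} (hz : 0 < z) :
    IntegrableOn (fun u => 1 - Real.exp (-(z*u))) (Ioi 0) n := by
  refine Integrable.mono' (hn.const_mul (max 1 z)) ?_ ?_
  · exact (Continuous.aestronglyMeasurable (by continuity))
  · filter_upwards [ae_restrict_mem measurableSet_Ioi] with u hu
    exact fim_int_bound hz hu

end mech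

section cont
set_option maxHeartbeats 2000000
variable {b σ β : ℝ} {m n : Measure ℝ}

lemma psi_continuousAt (hm : IntegrableOn (fun u => min u (u ^ 2)) (Ioi 0) m)
    {z₀ : ℝ} (hz₀ : 0 < z₀) : ContinuousAt (psi b σ m) z₀ := by
  have hJ : ContinuousAt (fun z => ∫ u in Ioi (0:ℝ),
      (Real.exp (-(z * u)) - 1 + z * u) ∂m) z₀ := by
    apply continuousAt_of_dominated (bound := fun u => max (2*z₀) ((2*z₀)^2/2) * min u (u^2))
    · filter_upwards with x
      exact Continuous.aestronglyMeasurable (by continuity)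
    · filter_upwards [Ioo_mem_nhds (by linarith : z₀/2 < z₀) (by linarith : z₀ < 2*z₀)] with x hx
      filter_upwards [ae_restrict_mem measurableSet_Ioi] with u hu
      have hb := psi_int_bound (show (0:ℝ) < x by linarith [hx.1]) hu
      refine hb.trans ?_
      have hminnn : (0:ℝ) ≤ min u (u^2) := le_min hu.le (by positivity)
      apply mul_le_mul_of_nonneg_right _ hminnn
      apply max_le_max (by linarith [hx.2]) _
      have : x^2 ≤ (2*z₀)^2 := by nlinarith [hx.1, hx.2]
      linarith
    · exact hm.const_mul _
    · filter_upwards with u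
      exact Continuous.continuousAt (by continuity)
  have : ContinuousAt (fun z => b * z + σ * z^2) z₀ := by fun_prop
  exact this.add hJ

lemma fim_continuousAt (hn : IntegrableOn (fun u => min 1 u) (Ioi 0) n)
    {z₀ : ℝ} (hz₀ : 0 < z₀) : ContinuousAt (Fim β n) z₀ := by
  have hJ : ContinuousAt (fun z => ∫ u in Ioi (0:ℝ),
      (1 - Real.exp (-(z * u))) ∂n) z₀ := by
    apply continuousAt_of_dominated (bound := fun u => max 1 (2*z₀) * min 1 u)
    · filter_upwards with x
      exact Continuous.aestronglyMeasurable (by continuity)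
    · filter_upwards [Ioo_mem_nhds (by linarith : z₀/2 < z₀) (by linarith : z₀ < 2*z₀)] with x hx
      filter_upwards [ae_restrict_mem measurableSet_Ioi] with u hu
      have hb := fim_int_bound (show (0:ℝ) < x by linarith [hx.1]) hu
      refine hb.trans ?_
      have hminnn : (0:ℝ) ≤ min 1 u := le_min zero_le_one hu.le
      apply mul_le_mul_of_nonneg_right _ hminnn
      exact max_le_max le_rfl (by linarith [hx.2])
    · exact hn.const_mul _
    · filter_upwards with u
      exact Continuous.continuousAt (by continuity)
  have : ContinuousAt (fun z => β * z) z₀ := by fun_prop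
  exact this.add hJ

lemma psi_pos (hb : 0 ≤ b) (hσ : 0 ≤ σ)
    (hm : IntegrableOn (fun u => min u (u ^ 2)) (Ioi 0) m)
    (hA3 : condA3 σ m) {z : ℝ} (hz : 0 < z) : 0 < psi b σ m z := by
  have hJnn : 0 ≤ ∫ u in Ioi (0:ℝ), (Real.exp (-(z * u)) - 1 + z * u) ∂m :=
    setIntegral_nonneg measurableSet_Ioi (fun u hu => aux_nonneg _)
  rcases hA3 with hσ' | hminf
  · have : 0 < σ * z^2 := by positivity
    unfold psi; nlinarith [mul_nonneg hb hz.le]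
  · have hm0 : 0 < m (Ioc (0:ℝ) 1) := by
      by_contra h
      push_neg at h
      have : m (Ioc (0:ℝ) 1) = 0 := le_antisymm h zero_le
      rw [setLIntegral_measure_zero _ _ this] at hminf
      exact ENNReal.zero_ne_top hminf
    have hJpos : 0 < ∫ u in Ioi (0:ℝ), (Real.exp (-(z * u)) - 1 + z * u) ∂m := by
      rw [setIntegral_pos_iff_support_of_nonneg_ae ?_ (psi_integrand_integrable hm hz)]
      · refine lt_of_lt_of_le hm0 (measure_mono ?_)
        intro u hu
        refine ⟨?_, hu.1⟩
        simp only [Function.mem_support]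
        exact ne_of_gt (aux_pos (by nlinarith [hu.1]))
      · filter_upwards [ae_restrict_mem measurableSet_Ioi] with u hu
        exact aux_nonneg _
    unfold psi; nlinarith [mul_nonneg hb hz.le, mul_nonneg hσ (sq_nonneg z)]

lemma fim_nonneg (hβ : 0 ≤ β) {z : ℝ} (hz : 0 ≤ z) : 0 ≤ Fim β n z := by
  have : 0 ≤ ∫ u in Ioi (0:ℝ), (1 - Real.exp (-(z * u))) ∂n :=
    setIntegral_nonneg measurableSet_Ioi
      (fun u hu => aux_one_sub_nonneg (mul_nonneg hz hu.le))
  unfold Fim; nlinarith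

end cont

section subst
variable {b σ β : ℝ} {m n : Measure ℝ} {v : ℝ → ℝ → ℝ}

lemma psiInv_contOn (hb : 0 ≤ b) (hσ : 0 ≤ σ)
    (hm : IntegrableOn (fun u => min u (u ^ 2)) (Ioi 0) m) (hA3 : condA3 σ m) :
    ContinuousOn (fun z => (psi b σ m z)⁻¹) (Ioi 0) := by
  intro z hz
  exact ((psi_continuousAt hm hz).inv₀ (psi_pos hb hσ hm hA3 hz).ne').continuousWithinAt

lemma psiInv_ii (hb : 0 ≤ b) (hσ : 0 ≤ σ)
    (hm : IntegrableOn (fun u => min u (u ^ 2)) (Ioi 0) m) (hA3 : condA3 σ m)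
    {a c : ℝ} (ha : 0 < a) (hc : 0 < c) :
    IntervalIntegrable (fun z => (psi b σ m z)⁻¹) volume a c := by
  apply ContinuousOn.intervalIntegrable
  apply (psiInv_contOn hb hσ hm hA3).mono
  intro x hx
  rcases le_total a c with h|h
  · rw [uIcc_of_le h] at hx; exact lt_of_lt_of_le ha hx.1
  · rw [uIcc_of_ge h] at hx; exact lt_of_lt_of_le hc hx.1

/-- change of variables: `∫_{(0,∞)} g(v_s(λ)) ds = ∫_{(0,λ]} g(z)/ψ(z) dz`. -/
lemma subst_lemma (hb : 0 ≤ b) (hσ : 0 ≤ σ)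
    (hm : IntegrableOn (fun u => min u (u ^ 2)) (Ioi 0) m) (hA3 : condA3 σ m)
    (hv : IsCumulant b σ m v) {lam : ℝ} (hlam : 0 < lam) (g : ℝ → ℝ) :
    ∫ s in Ioi (0:ℝ), g (v s lam) = ∫ z in Ioc 0 lam, (psi b σ m z)⁻¹ * g z := by
  set S : ℝ → ℝ := fun a => ∫ z in a..lam, (psi b σ m z)⁻¹ with hS
  have hpos : ∀ z ∈ Ioi (0:ℝ), 0 < psi b σ m z := fun z hz => psi_pos hb hσ hm hA3 hz
  have hS' : ∀ z ∈ Ioc (0:ℝ) lam, HasDerivAt S (-(psi b σ m z)⁻¹) z := by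
    intro z hz
    refine intervalIntegral.integral_hasDerivAt_left (psiInv_ii hb hσ hm hA3 hz.1 hlam)
      (ContinuousOn.stronglyMeasurableAtFilter isOpen_Ioi
        (psiInv_contOn hb hσ hm hA3) z hz.1) ?_
    exact ((psi_continuousAt hm hz.1).inv₀ (hpos z hz.1).ne')
  have hanti : ∀ a₁ ∈ Ioc (0:ℝ) lam, ∀ a₂ ∈ Ioc (0:ℝ) lam, a₁ < a₂ → S a₂ < S a₁ := by
    intro a₁ h₁ a₂ h₂ h12
    have hii : IntervalIntegrable (fun z => (psi b σ m z)⁻¹) volume a₁ a₂ :=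
      psiInv_ii hb hσ hm hA3 h₁.1 h₂.1
    have hii2 : IntervalIntegrable (fun z => (psi b σ m z)⁻¹) volume a₂ lam :=
      psiInv_ii hb hσ hm hA3 h₂.1 hlam
    have hadd : (∫ z in a₁..a₂, (psi b σ m z)⁻¹) + ∫ z in a₂..lam, (psi b σ m z)⁻¹ = S a₁ :=
      intervalIntegral.integral_add_adjacent_intervals hii hii2
    have hposint : 0 < ∫ z in a₁..a₂, (psi b σ m z)⁻¹ := by
      apply intervalIntegral.intervalIntegral_pos_of_pos_on hii
      · intro x hx
        exact inv_pos.2 (hpos x (lt_trans h₁.1 hx.1))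
      · exact h12
    simp only [hS] at hadd ⊢
    linarith
  have hinj : InjOn S (Ioc 0 lam) := by
    intro a₁ h₁ a₂ h₂ he
    rcases lt_trichotomy a₁ a₂ with h|h|h
    · exact absurd he (ne_of_gt (hanti a₁ h₁ a₂ h₂ h))
    · exact h
    · exact absurd he (ne_of_lt (hanti a₂ h₂ a₁ h₁ h))
  have himage : S '' Ioc 0 lam = Ici 0 := by
    apply Subset.antisymm
    · rintro t ⟨a, ha, rfl⟩
      exact intervalIntegral.integral_nonneg ha.2
        (fun u hu => (inv_pos.2 (hpos u (lt_of_lt_of_le ha.1 hu.1))).le)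
    · intro t ht
      obtain ⟨hmem, heq⟩ := hv lam hlam t ht
      exact ⟨v t lam, hmem, heq⟩
  have hvS : ∀ z ∈ Ioc (0:ℝ) lam, v (S z) lam = z := by
    intro z hz
    have hSz : S z ∈ Ici (0:ℝ) := himage ▸ mem_image_of_mem S hz
    obtain ⟨hmem, heq⟩ := hv lam hlam (S z) hSz
    exact hinj hmem hz heq
  calc ∫ s in Ioi (0:ℝ), g (v s lam)
      = ∫ s in Ici (0:ℝ), g (v s lam) := (integral_Ici_eq_integral_Ioi).symm
    _ = ∫ s in S '' Ioc 0 lam, g (v s lam) := by rw [himage]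
    _ = ∫ z in Ioc 0 lam, |(-(psi b σ m z)⁻¹)| • g (v (S z) lam) :=
        integral_image_eq_integral_abs_deriv_smul measurableSet_Ioc
          (fun z hz => (hS' z hz).hasDerivWithinAt) hinj _
    _ = ∫ z in Ioc 0 lam, (psi b σ m z)⁻¹ * g z := by
        apply setIntegral_congr_fun measurableSet_Ioc
        intro z hz
        simp only
        rw [hvS z hz, abs_neg, abs_of_pos (inv_pos.2 (hpos z hz.1)), smul_eq_mul]

end subst

section hfun
variable {b σ β : ℝ} {m n : Measure ℝ}

lemma fimpsi_contOn (hb : 0 ≤ b) (hσ : 0 ≤ σ)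
    (hm : IntegrableOn (fun u => min u (u ^ 2)) (Ioi 0) m)
    (hn : IntegrableOn (fun u => min 1 u) (Ioi 0) n) (hA3 : condA3 σ m) :
    ContinuousOn (fun z => Fim β n z / psi b σ m z) (Ioi 0) := by
  intro z hz
  exact (((fim_continuousAt hn hz).div (psi_continuousAt hm hz)
    (psi_pos hb hσ hm hA3 hz).ne')).continuousWithinAt

lemma fimpsi_integrableOn (hb : 0 ≤ b) (hσ : 0 ≤ σ)
    (hm : IntegrableOn (fun u => min u (u ^ 2)) (Ioi 0) m)
    (hn : IntegrableOn (fun u => min 1 u) (Ioi 0) n)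
    (hA2 : condA2 b σ β m n) (hA3 : condA3 σ m) {lam : ℝ} (hlam : 0 < lam) :
    IntegrableOn (fun z => Fim β n z / psi b σ m z) (Ioc 0 lam) := by
  obtain ⟨lam₀, hlam₀, hint⟩ := hA2
  have hminpos : 0 < min lam lam₀ := lt_min hlam hlam₀
  set ε := min lam lam₀ / 2 with hε
  have hεpos : 0 < ε := by positivity
  have hεlam : ε ≤ lam := by
    have := min_le_left lam lam₀; rw [hε]; linarith
  have hεlam₀ : ε < lam₀ := by
    have := min_le_right lam lam₀; rw [hε]; linarith
  have h1 : IntegrableOn (fun z => Fim β n z / psi b σ m z) (Ioo 0 ε) :=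
    hint.mono_set (Ioo_subset_Ioo_right hεlam₀.le)
  have h2 : IntegrableOn (fun z => Fim β n z / psi b σ m z) (Icc ε lam) := by
    apply ContinuousOn.integrableOn_compact isCompact_Icc
    exact (fimpsi_contOn hb hσ hm hn hA3).mono
      (fun z hz => lt_of_lt_of_le hεpos hz.1)
  refine (h1.union h2).mono_set ?_
  intro z hz
  rcases lt_or_ge z ε with h|h
  · exact Or.inl ⟨hz.1, h⟩
  · exact Or.inr ⟨h, hz.2⟩

lemma hfun_hasDerivAt (hb : 0 ≤ b) (hσ : 0 ≤ σ)
    (hm : IntegrableOn (fun u => min u (u ^ 2)) (Ioi 0) m)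
    (hn : IntegrableOn (fun u => min 1 u) (Ioi 0) n)
    (hA2 : condA2 b σ β m n) (hA3 : condA3 σ m) {lam : ℝ} (hlam : 0 < lam) :
    HasDerivAt (fun x => ∫ z in Ioc (0:ℝ) x, Fim β n z / psi b σ m z)
      (Fim β n lam / psi b σ m lam) lam := by
  set W := fun z => Fim β n z / psi b σ m z with hW
  have hμ : 0 < lam/2 := by linarith
  have key : ∀ x ∈ Ioi (lam/2), (∫ z in Ioc (0:ℝ) x, W z)
      = (∫ z in Ioc (0:ℝ) (lam/2), W z) + ∫ z in (lam/2)..x, W z := by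
    intro x hx
    have hx' : lam/2 < x := hx
    rw [intervalIntegral.integral_of_le hx'.le,
      ← setIntegral_union (Ioc_disjoint_Ioc_of_le le_rfl) measurableSet_Ioc
        (fimpsi_integrableOn hb hσ hm hn hA2 hA3 hμ)
        ((fimpsi_integrableOn hb hσ hm hn hA2 hA3 (by linarith : (0:ℝ) < x)).mono_set
          (Ioc_subset_Ioc_left hμ.le)),
      Ioc_union_Ioc_eq_Ioc hμ.le hx'.le]
  have hii : IntervalIntegrable W volume (lam/2) lam := by
    apply ContinuousOn.intervalIntegrable
    apply (fimpsi_contOn hb hσ hm hn hA3 (β := β)).mono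
    intro x hx
    rw [uIcc_of_le (by linarith : lam/2 ≤ lam)] at hx
    exact lt_of_lt_of_le hμ hx.1
  have hd : HasDerivAt (fun x => (∫ z in Ioc (0:ℝ) (lam/2), W z) + ∫ z in (lam/2)..x, W z)
      (W lam) lam := by
    apply HasDerivAt.const_add
    refine intervalIntegral.integral_hasDerivAt_right hii
      (ContinuousOn.stronglyMeasurableAtFilter isOpen_Ioi
        (fimpsi_contOn hb hσ hm hn hA3) lam hlam) ?_
    exact (fim_continuousAt hn hlam).div (psi_continuousAt hm hlam)
      (psi_pos hb hσ hm hA3 hlam).ne'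
  apply hd.congr_of_eventuallyEq
  filter_upwards [Ioi_mem_nhds (by linarith : lam/2 < lam)] with x hx
  exact key x hx

end hfun

section prob
variable {Ω : Type*} [MeasureSpace Ω] [IsProbabilityMeasure (volume : Measure Ω)]
variable {Z : Ω → ℝ}

lemma expZ_meas (hZ : AEMeasurable Z (volume : Measure Ω)) (x : ℝ) :
    AEStronglyMeasurable (fun ω => Real.exp (-(x * Z ω))) volume :=
  (Real.measurable_exp.comp_aemeasurable ((hZ.const_mul x).neg)).aestronglyMeasurable

lemma expZ_integrable (hZ : AEMeasurable Z (volume : Measure Ω)) (hZpos : ∀ ω, 0 ≤ Z ω)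
    {x : ℝ} (hx : 0 ≤ x) :
    Integrable (fun ω => Real.exp (-(x * Z ω))) volume := by
  refine Integrable.mono' (integrable_const 1) (expZ_meas hZ x) ?_
  filter_upwards with ω
  rw [Real.norm_eq_abs, abs_of_pos (Real.exp_pos _)]
  exact Real.exp_le_one_iff.2 (by nlinarith [hZpos ω])

lemma zexpZ_integrable (hZ : AEMeasurable Z (volume : Measure Ω)) (hZpos : ∀ ω, 0 ≤ Z ω)
    {x : ℝ} (hx : 0 < x) :
    Integrable (fun ω => Z ω * Real.exp (-(x * Z ω))) volume := by
  refine Integrable.mono' (integrable_const ((x * Real.exp 1)⁻¹))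
    (hZ.aestronglyMeasurable.mul (expZ_meas hZ x)) ?_
  filter_upwards with ω
  rw [Real.norm_eq_abs, abs_of_nonneg (mul_nonneg (hZpos ω) (Real.exp_pos _).le)]
  exact aux_mul_exp_le hx (hZpos ω)

lemma L_hasDerivAt (hZ : AEMeasurable Z (volume : Measure Ω)) (hZpos : ∀ ω, 0 ≤ Z ω)
    {lam : ℝ} (hlam : 0 < lam) :
    HasDerivAt (fun x => ∫ ω, Real.exp (-(x * Z ω)))
      (-∫ ω, Z ω * Real.exp (-(lam * Z ω))) lam := by
  have key := hasDerivAt_integral_of_dominated_loc_of_deriv_le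
    (F := fun x (ω : Ω) => Real.exp (-(x * Z ω)))
    (F' := fun x ω => -(Z ω * Real.exp (-(x * Z ω))))
    (x₀ := lam) (bound := fun _ => (lam/2 * Real.exp 1)⁻¹)
    (Metric.ball_mem_nhds lam (show (0:ℝ) < lam/2 by linarith))
    (by filter_upwards with x; exact expZ_meas hZ x)
    (expZ_integrable hZ hZpos hlam.le)
    ((hZ.aestronglyMeasurable.mul (expZ_meas hZ lam)).neg)
    ?_ (integrable_const _) ?_
  · have := key.2
    rwa [integral_neg] at this
  · filter_upwards with ω x hx
    have hx' : lam/2 < x := by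
      rw [Metric.mem_ball, Real.dist_eq] at hx
      have := abs_lt.1 hx
      linarith [this.1]
    rw [norm_neg, Real.norm_eq_abs,
      abs_of_nonneg (mul_nonneg (hZpos ω) (Real.exp_pos _).le)]
    calc Z ω * Real.exp (-(x * Z ω)) ≤ Z ω * Real.exp (-(lam/2 * Z ω)) := by
          apply mul_le_mul_of_nonneg_left _ (hZpos ω)
          exact Real.exp_le_exp.2 (by nlinarith [hZpos ω])
      _ ≤ (lam/2 * Real.exp 1)⁻¹ := aux_mul_exp_le (by linarith) (hZpos ω)
  · filter_upwards with ω x hx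
    have h := ((hasDerivAt_mul_const (x := x) (Z ω)).neg).exp
    exact h.congr_deriv (by simp only [Pi.neg_apply]; ring)

end prob

section limits
variable {b σ β : ℝ} {m n : Measure ℝ}

lemma slope_tendsto_onesub {u : ℝ} :
    Tendsto (fun x => (1 - Real.exp (-(x * u))) / x) (𝓝[>] (0:ℝ)) (𝓝 u) := by
  have hg : HasDerivAt (fun x : ℝ => 1 - Real.exp (-(x * u))) u 0 := by
    have h := (((hasDerivAt_mul_const (x := (0:ℝ)) u).neg).exp).const_sub 1
    exact h.congr_deriv (by simp)
  rw [hasDerivAt_iff_tendsto_slope] at hg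
  have hmono : 𝓝[>] (0:ℝ) ≤ 𝓝[≠] (0:ℝ) :=
    nhdsWithin_mono _ (fun x hx => ne_of_gt hx)
  refine Tendsto.congr ?_ (hg.mono_left hmono)
  intro x
  simp [slope_def_field]

lemma slope_tendsto_psi {u : ℝ} :
    Tendsto (fun x => (Real.exp (-(x * u)) - 1 + x * u) / x) (𝓝[>] (0:ℝ)) (𝓝 0) := by
  have hg : HasDerivAt (fun x : ℝ => Real.exp (-(x * u)) - 1 + x * u) 0 0 := by
    have h := ((((hasDerivAt_mul_const (x := (0:ℝ)) u).neg).exp).sub_const 1).add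
      (hasDerivAt_mul_const (x := (0:ℝ)) u)
    exact h.congr_deriv (by simp)
  rw [hasDerivAt_iff_tendsto_slope] at hg
  have hmono : 𝓝[>] (0:ℝ) ≤ 𝓝[≠] (0:ℝ) :=
    nhdsWithin_mono _ (fun x hx => ne_of_gt hx)
  refine Tendsto.congr ?_ (hg.mono_left hmono)
  intro x
  simp [slope_def_field]

lemma Fim_div_lim (hnint : IntegrableOn (fun u => u) (Ioi 0) n) :
    Tendsto (fun x => Fim β n x / x) (𝓝[>] (0:ℝ))
      (𝓝 (β + ∫ u in Ioi (0:ℝ), u ∂n)) := by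
  have htint : Tendsto (fun x => ∫ u in Ioi (0:ℝ), (1 - Real.exp (-(x * u))) / x ∂n)
      (𝓝[>] (0:ℝ)) (𝓝 (∫ u in Ioi (0:ℝ), u ∂n)) := by
    apply tendsto_integral_filter_of_dominated_convergence (bound := fun u => u)
    · filter_upwards with x
      exact Continuous.aestronglyMeasurable (by continuity)
    · filter_upwards [self_mem_nhdsWithin] with x hx
      filter_upwards [ae_restrict_mem measurableSet_Ioi] with u hu
      have hx' : (0:ℝ) < x := hx
      have h1 : 0 ≤ 1 - Real.exp (-(x*u)) :=
        aux_one_sub_nonneg (mul_nonneg hx'.le hu.le)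
      rw [Real.norm_eq_abs, abs_of_nonneg (div_nonneg h1 hx'.le), div_le_iff₀ hx']
      have := aux_one_sub_le_lin (mul_nonneg hx'.le hu.le)
      linarith
    · exact hnint
    · filter_upwards [ae_restrict_mem measurableSet_Ioi] with u hu
      exact slope_tendsto_onesub
  have hsum := (tendsto_const_nhds (x := β)
    (f := 𝓝[>] (0:ℝ))).add htint
  refine Tendsto.congr' ?_ hsum
  filter_upwards [self_mem_nhdsWithin] with x hx
  have hx' : (0:ℝ) < x := hx
  unfold Fim
  rw [add_div, mul_div_assoc, div_self hx'.ne', mul_one, integral_div]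

lemma psi_div_lim (hm : IntegrableOn (fun u => min u (u ^ 2)) (Ioi 0) m) :
    Tendsto (fun x => psi b σ m x / x) (𝓝[>] (0:ℝ)) (𝓝 b) := by
  have htint : Tendsto (fun x => ∫ u in Ioi (0:ℝ), (Real.exp (-(x * u)) - 1 + x * u) / x ∂m)
      (𝓝[>] (0:ℝ)) (𝓝 (∫ u in Ioi (0:ℝ), (0:ℝ) ∂m)) := by
    apply tendsto_integral_filter_of_dominated_convergence (bound := fun u => min u (u^2))
    · filter_upwards with x
      exact Continuous.aestronglyMeasurable (by continuity)
    · filter_upwards [Ioc_mem_nhdsGT zero_lt_one] with x hx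
      filter_upwards [ae_restrict_mem measurableSet_Ioi] with u hu
      have hx' : (0:ℝ) < x := hx.1
      have h0 : 0 ≤ Real.exp (-(x*u)) - 1 + x*u := aux_nonneg _
      rw [Real.norm_eq_abs, abs_of_nonneg (div_nonneg h0 hx'.le)]
      apply le_min
      · rw [div_le_iff₀ hx']
        have := aux_le_lin (mul_nonneg hx'.le hu.le)
        nlinarith
      · rw [div_le_iff₀ hx']
        have := aux_le_quad (mul_nonneg hx'.le hu.le)
        nlinarith [hx.2, (show (0:ℝ) < u from hu).le, sq_nonneg u]
    · exact hm
    · filter_upwards [ae_restrict_mem measurableSet_Ioi] with u hu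
      exact slope_tendsto_psi
  rw [integral_zero] at htint
  have hσx : Tendsto (fun x : ℝ => σ * x) (𝓝[>] (0:ℝ)) (𝓝 0) := by
    have : Tendsto (fun x : ℝ => σ * x) (𝓝 (0:ℝ)) (𝓝 (σ * 0)) :=
      (continuous_const.mul continuous_id).tendsto 0
    rw [mul_zero] at this
    exact this.mono_left nhdsWithin_le_nhds
  have hsum := ((tendsto_const_nhds (x := b) (f := 𝓝[>] (0:ℝ))).add hσx).add htint
  rw [add_zero, add_zero] at hsum
  refine Tendsto.congr' ?_ hsum
  filter_upwards [self_mem_nhdsWithin] with x hx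
  have hx' : (0:ℝ) < x := hx
  unfold psi
  rw [add_div, add_div, integral_div, mul_div_assoc, div_self hx'.ne', mul_one]
  congr 2
  field_simp

end limits

theorem stationary_size_biased_identity (b σ β : ℝ) (m n : Measure ℝ)
    (hb : 0 ≤ b) (hσ : 0 ≤ σ) (hβ : 0 ≤ β)
    (hm : IntegrableOn (fun u => min u (u ^ 2)) (Ioi 0) m)
    (hn : IntegrableOn (fun u => min 1 u) (Ioi 0) n)
    (hA2 : condA2 b σ β m n) (hA3 : condA3 σ m)
    (v : ℝ → ℝ → ℝ) (hv : IsCumulant b σ m v)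
    (hv0 : ∀ t ≥ (0 : ℝ), v t 0 = 0)
    (Ω : Type*) [MeasureSpace Ω] [IsProbabilityMeasure (volume : Measure Ω)]
    (Z : Ω → ℝ) (hZpos : ∀ ω, 0 ≤ Z ω)
    (hLaplace : ∀ lam ≥ (0 : ℝ),
      ∫ ω, Real.exp (-(lam * Z ω)) =
        Real.exp (-(∫ s in Ioi (0 : ℝ), Fim β n (v s lam)))) :
    (∀ lam > (0 : ℝ),
      ∫ ω, Z ω * Real.exp (-(lam * Z ω)) =
        Fim β n lam / psi b σ m lam * ∫ ω, Real.exp (-(lam * Z ω))) ∧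
    (0 < b → IntegrableOn (fun u => u) (Ioi 0) n →
      ∫ ω, Z ω = (β + ∫ u in Ioi (0 : ℝ), u ∂n) / b) := by
  have hint1 : Integrable (fun ω => Real.exp (-((1:ℝ) * Z ω))) volume := by
    by_contra h
    have h0 := hLaplace 1 (by norm_num)
    rw [integral_undef h] at h0
    exact (Real.exp_pos _).ne' h0.symm
  have hZmeas : AEMeasurable Z (volume : Measure Ω) := by
    have h1 := hint1.aestronglyMeasurable.aemeasurable
    have he : (fun ω => -Real.log (Real.exp (-((1:ℝ) * Z ω)))) = Z := by
      funext ω; rw [Real.log_exp]; ring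
    rw [← he]
    exact (Real.measurable_log.comp_aemeasurable h1).neg
  have hsubst : ∀ x > (0:ℝ), (∫ s in Ioi (0:ℝ), Fim β n (v s x))
      = ∫ z in Ioc (0:ℝ) x, Fim β n z / psi b σ m z := by
    intro x hx
    rw [subst_lemma hb hσ hm hA3 hv hx (Fim β n)]
    exact setIntegral_congr_fun measurableSet_Ioc (fun z hz => inv_mul_eq_div _ _)
  have part1 : ∀ lam > (0:ℝ),
      ∫ ω, Z ω * Real.exp (-(lam * Z ω)) =
        Fim β n lam / psi b σ m lam * ∫ ω, Real.exp (-(lam * Z ω)) := by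
    intro lam hlam
    have hH := hfun_hasDerivAt hb hσ hm hn hA2 hA3 hlam
    have hRHS := (hH.neg).exp
    have hev : (fun x => ∫ ω, Real.exp (-(x * Z ω))) =ᶠ[𝓝 lam]
        (fun x => Real.exp (-(∫ z in Ioc (0:ℝ) x, Fim β n z / psi b σ m z))) := by
      filter_upwards [Ioi_mem_nhds hlam] with x hx
      rw [hLaplace x (le_of_lt hx), hsubst x hx]
    have hLd := L_hasDerivAt hZmeas hZpos hlam
    have hLd2 := hRHS.congr_of_eventuallyEq hev
    have huniq := hLd.unique hLd2
    rw [mul_neg, neg_inj] at huniq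
    have hL : (∫ ω, Real.exp (-(lam * Z ω)))
        = Real.exp (-(∫ z in Ioc (0:ℝ) lam, Fim β n z / psi b σ m z)) := by
      rw [hLaplace lam hlam.le, hsubst lam hlam]
    rw [hL, huniq, mul_comm]
    rfl
  refine ⟨part1, ?_⟩
  intro hb' hnint
  set I := β + ∫ u in Ioi (0:ℝ), u ∂n with hI
  have hInn : 0 ≤ I :=
    add_nonneg hβ (setIntegral_nonneg measurableSet_Ioi fun u hu => (le_of_lt hu))
  have hratio : Tendsto (fun x => Fim β n x / psi b σ m x) (𝓝[>] (0:ℝ)) (𝓝 (I / b)) := by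
    have h3 := (Fim_div_lim (β := β) hnint).div (psi_div_lim (b := b) (σ := σ) hm) hb'.ne'
    refine Tendsto.congr' ?_ h3
    filter_upwards [self_mem_nhdsWithin] with x hx
    have hx' : (0:ℝ) < x := hx
    have hψ : psi b σ m x ≠ 0 := (psi_pos hb hσ hm hA3 hx').ne'
    simp only [Pi.div_apply]
    field_simp
  set seq : ℕ → ℝ := fun k => ((k:ℝ) + 1)⁻¹ with hseq
  have hseqpos : ∀ k, 0 < seq k := fun k => by positivity
  have hseq0 : Tendsto seq atTop (𝓝[>] (0:ℝ)) := by
    rw [tendsto_nhdsWithin_iff]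
    constructor
    · simpa [hseq, one_div] using tendsto_one_div_add_atTop_nhds_zero_nat (𝕜 := ℝ)
    · filter_upwards with k; exact hseqpos k
  have hexp_ptws : ∀ ω, Tendsto (fun k => Real.exp (-(seq k * Z ω))) atTop (𝓝 1) := by
    intro ω
    have h1 : Tendsto (fun k => -(seq k * Z ω)) atTop (𝓝 (-(0 * Z ω))) :=
      (((hseq0.mono_right nhdsWithin_le_nhds)).mul_const (Z ω)).neg
    rw [zero_mul, neg_zero] at h1
    simpa [Function.comp_def] using (Real.continuous_exp.tendsto 0).comp h1
  have hLlim : Tendsto (fun k => ∫ ω, Real.exp (-(seq k * Z ω))) atTop (𝓝 1) := by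
    have h := tendsto_integral_filter_of_dominated_convergence (μ := (volume : Measure Ω))
      (F := fun k ω => Real.exp (-(seq k * Z ω))) (f := fun _ => (1:ℝ))
      (bound := fun _ => (1:ℝ))
      (by filter_upwards with k; exact expZ_meas hZmeas _)
      (by
        filter_upwards with k
        filter_upwards with ω
        rw [Real.norm_eq_abs, abs_of_pos (Real.exp_pos _)]
        exact Real.exp_le_one_iff.2 (by nlinarith [hZpos ω, hseqpos k]))
      (integrable_const 1)
      (by filter_upwards with ω; exact hexp_ptws ω)
    simpa using h
  have haZ : Tendsto (fun k => ∫ ω, Z ω * Real.exp (-(seq k * Z ω))) atTop (𝓝 (I / b)) := by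
    have h := (hratio.comp hseq0).mul hLlim
    rw [mul_one] at h
    refine Tendsto.congr ?_ h
    intro k
    exact (part1 (seq k) (hseqpos k)).symm
  have hmeask : ∀ k, AEMeasurable
      (fun ω => ENNReal.ofReal (Z ω * Real.exp (-(seq k * Z ω)))) volume :=
    fun k => (hZmeas.mul (expZ_meas hZmeas _).aemeasurable).ennreal_ofReal
  have hlin := lintegral_tendsto_of_tendsto_of_monotone (F := fun ω => ENNReal.ofReal (Z ω))
    hmeask
    (by
      filter_upwards with ω
      intro k l hkl
      apply ENNReal.ofReal_le_ofReal
      apply mul_le_mul_of_nonneg_left _ (hZpos ω)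
      apply Real.exp_le_exp.2
      have hle : seq l ≤ seq k := by
        apply inv_anti₀ (by positivity)
        have : (k:ℝ) ≤ (l:ℝ) := Nat.cast_le.2 hkl
        linarith
      nlinarith [hZpos ω])
    (by
      filter_upwards with ω
      have h1 : Tendsto (fun k => Z ω * Real.exp (-(seq k * Z ω))) atTop (𝓝 (Z ω * 1)) :=
        tendsto_const_nhds.mul (hexp_ptws ω)
      rw [mul_one] at h1
      exact (ENNReal.continuous_ofReal.tendsto _).comp h1)
  have heqk : ∀ k, (∫⁻ ω, ENNReal.ofReal (Z ω * Real.exp (-(seq k * Z ω))))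
      = ENNReal.ofReal (∫ ω, Z ω * Real.exp (-(seq k * Z ω))) := by
    intro k
    rw [← ofReal_integral_eq_lintegral_ofReal (zexpZ_integrable hZmeas hZpos (hseqpos k))
      (by filter_upwards with ω; exact mul_nonneg (hZpos ω) (Real.exp_pos _).le)]
  have hlin2 : Tendsto (fun k => ENNReal.ofReal (∫ ω, Z ω * Real.exp (-(seq k * Z ω))))
      atTop (𝓝 (∫⁻ ω, ENNReal.ofReal (Z ω))) :=
    Tendsto.congr (fun k => heqk k) hlin
  have hlim2 : Tendsto (fun k => ENNReal.ofReal (∫ ω, Z ω * Real.exp (-(seq k * Z ω))))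
      atTop (𝓝 (ENNReal.ofReal (I/b))) :=
    (ENNReal.continuous_ofReal.tendsto _).comp haZ
  have hZlint : (∫⁻ ω, ENNReal.ofReal (Z ω)) = ENNReal.ofReal (I / b) :=
    tendsto_nhds_unique hlin2 hlim2
  rw [integral_eq_lintegral_of_nonneg_ae (Filter.Eventually.of_forall hZpos)
    hZmeas.aestronglyMeasurable, hZlint,
    ENNReal.toReal_ofReal (div_nonneg hInn hb'.le)]
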